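/- arXiv:1405.7573 — 5 statements merged into one kernel-verified Lean document; each statement's English description precedes it below -/
import Mathlib

section
/- Let k be a positive integer and let G be a finite connected simple graph with minimum degree δ(G) and maximum degree Δ(G) satisfying δ(G) < Δ(G) = k + 1. Then F_k(G) = 1. -/
/-- One step of the `k`-forcing color change process: a colored vertex (in `S`)
with at most `k` non-colored neighbors causes all of its neighbors to become colored. -/
def kStep {V : Type*} [Fintype V] [DecidableEq V] (G : SimpleGraph V) [DecidableRel G.Adj]
    (k : ℕ) (S : Finset V) : Finset V :=
  S ∪ Finset.univ.filter (fun v => ∃ u ∈ S, G.Adj u v ∧ (G.neighborFinset u \ S).card ≤ k)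

/-- `S` is a `k`-forcing set if iterating the color change rule starting from `S`
eventually colors all vertices of `G`. -/
def IsKForcingSet {V : Type*} [Fintype V] [DecidableEq V] (G : SimpleGraph V)
    [DecidableRel G.Adj] (k : ℕ) (S : Finset V) : Prop :=
  ∃ n : ℕ, (kStep G k)^[n] S = Finset.univ

/-- The `k`-forcing number `F_k(G)`: the minimum cardinality of a `k`-forcing set. -/
noncomputable def kForcingNumber {V : Type*} [Fintype V] [DecidableEq V] (G : SimpleGraph V)
    [DecidableRel G.Adj] (k : ℕ) : ℕ :=
  sInf {m | ∃ S : Finset V, S.card = m ∧ IsKForcingSet G k S}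

section Aux

variable {V : Type*} [Fintype V] [DecidableEq V] (G : SimpleGraph V) [DecidableRel G.Adj] (k : ℕ)

lemma subset_kStep (S : Finset V) : S ⊆ kStep G k S := Finset.subset_union_left

lemma mem_kStep_of {S : Finset V} {u w : V} (hu : u ∈ S) (h : G.Adj u w)
    (hc : (G.neighborFinset u \ S).card ≤ k) : w ∈ kStep G k S := by
  apply Finset.mem_union_right
  simp only [Finset.mem_filter, Finset.mem_univ, true_and]
  exact ⟨u, hu, h, hc⟩

/-- Every vertex of `S` has a neighbor in `S`. -/
def KFInv (S : Finset V) : Prop := ∀ u ∈ S, ∃ w ∈ S, G.Adj u w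

lemma kfinv_kStep {S : Finset V} (h : KFInv G S) : KFInv G (kStep G k S) := by
  intro u hu
  rcases Finset.mem_union.1 hu with hu | hu
  · obtain ⟨w, hw, hadj⟩ := h u hu
    exact ⟨w, subset_kStep G k S hw, hadj⟩
  · simp only [Finset.mem_filter, Finset.mem_univ, true_and] at hu
    obtain ⟨u', hu', hadj, _⟩ := hu
    exact ⟨u', subset_kStep G k S hu', hadj.symm⟩

lemma crossing {S : Finset V} : ∀ {a b : V} (_ : G.Walk a b), a ∈ S → b ∉ S →
    ∃ u ∈ S, ∃ w, w ∉ S ∧ G.Adj u w := by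
  intro a b p
  induction p with
  | nil => intro ha hb; exact absurd ha hb
  | @cons x y z h q ih =>
    intro ha hb
    by_cases hc : y ∈ S
    · exact ih hc hb
    · exact ⟨x, ha, y, hc, h⟩

lemma kStep_grow (hdeg : ∀ v : V, G.degree v ≤ k + 1) (hconn : G.Connected)
    {S : Finset V} (hS : S.Nonempty) (hKFInv : KFInv G S) (hne : S ≠ Finset.univ) : S ⊂ kStep G k S := by
  have hb : ∃ b, b ∉ S := by
    by_contra hcon
    push_neg at hcon
    exact hne (Finset.eq_univ_iff_forall.2 hcon)
  obtain ⟨b, hb⟩ := hb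
  obtain ⟨a, ha⟩ := hS
  obtain ⟨p⟩ := hconn a b
  obtain ⟨u, hu, w, hw, hadj⟩ := crossing G p ha hb
  obtain ⟨z, hz, hzadj⟩ := hKFInv u hu
  have hzsub : G.neighborFinset u \ S ⊆ (G.neighborFinset u).erase z := by
    intro x hx
    rcases Finset.mem_sdiff.1 hx with ⟨hx1, hx2⟩
    exact Finset.mem_erase.2 ⟨fun h => hx2 (h ▸ hz), hx1⟩
  have hcard : (G.neighborFinset u \ S).card ≤ k := by
    calc (G.neighborFinset u \ S).card ≤ ((G.neighborFinset u).erase z).card :=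
          Finset.card_le_card hzsub
      _ = (G.neighborFinset u).card - 1 :=
          Finset.card_erase_of_mem (by rwa [SimpleGraph.mem_neighborFinset])
      _ = G.degree u - 1 := by rw [SimpleGraph.card_neighborFinset_eq_degree]
      _ ≤ k := by have := hdeg u; omega
  exact Finset.ssubset_iff_of_subset (subset_kStep G k S) |>.2
    ⟨w, mem_kStep_of G k hu hadj hcard, hw⟩

lemma reach_univ (hdeg : ∀ v : V, G.degree v ≤ k + 1) (hconn : G.Connected) :
    ∀ m : ℕ, ∀ S : Finset V, S.Nonempty → KFInv G S → Fintype.card V - S.card ≤ m →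
      ∃ n, (kStep G k)^[n] S = Finset.univ := by
  intro m
  induction m with
  | zero =>
    intro S _ _ hcard
    refine ⟨0, ?_⟩
    have h1 : S.card ≤ Fintype.card V := S.card_le_univ
    have : S.card = Fintype.card V := by omega
    exact Finset.eq_univ_of_card S this
  | succ m ih =>
    intro S hSne hKFInv hcard
    by_cases hne : S = Finset.univ
    · exact ⟨0, hne⟩
    · have hgrow := kStep_grow G k hdeg hconn hSne hKFInv hne
      have hlt := Finset.card_lt_card hgrow
      have hle : (kStep G k S).card ≤ Fintype.card V := (kStep G k S).card_le_univ
      obtain ⟨n, hn⟩ := ih (kStep G k S) (hSne.mono (subset_kStep G k S)) (kfinv_kStep G k hKFInv) (by omega)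
      exact ⟨n + 1, by rwa [Function.iterate_succ_apply]⟩

lemma kStep_empty : kStep G k (∅ : Finset V) = ∅ := by
  simp [kStep]

end Aux

/-- If `G` is a connected graph with `δ(G) < Δ(G) = k + 1`, then `F_k(G) = 1`. -/
theorem kForcingNumber_eq_one_of_minDegree_lt {V : Type*} [Fintype V] [DecidableEq V]
    (G : SimpleGraph V) [DecidableRel G.Adj] (k : ℕ) (hk : 1 ≤ k)
    (hconn : G.Connected) (hδ : G.minDegree < G.maxDegree) (hΔ : G.maxDegree = k + 1) :
    kForcingNumber G k = 1 := by
  have hne : Nonempty V := hconn.nonempty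
  have hdeg : ∀ v : V, G.degree v ≤ k + 1 := fun v => hΔ ▸ G.degree_le_maxDegree v
  obtain ⟨v, hv⟩ := G.exists_minimal_degree_vertex
  have hdv : G.degree v ≤ k := by omega
  obtain ⟨x, hx⟩ := G.exists_maximal_degree_vertex
  have hvx : v ≠ x := by
    intro h; rw [h] at hv; omega
  -- v has a neighbor
  obtain ⟨p⟩ := hconn v x
  have hw : ∃ w, G.Adj v w := by
    cases p with
    | nil => exact absurd rfl hvx
    | cons h q => exact ⟨_, h⟩
  obtain ⟨w, hw⟩ := hw
  -- {v} is a k-forcing set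
  have hforce : IsKForcingSet G k ({v} : Finset V) := by
    set S₁ := kStep G k ({v} : Finset V) with hS₁
    have hvmem : ∀ u, G.Adj v u → u ∈ S₁ := by
      intro u hu
      refine mem_kStep_of G k (Finset.mem_singleton_self v) hu ?_
      calc (G.neighborFinset v \ {v}).card ≤ (G.neighborFinset v).card :=
            Finset.card_le_card (Finset.sdiff_subset)
        _ = G.degree v := G.card_neighborFinset_eq_degree v
        _ ≤ k := hdv
    have hvS₁ : v ∈ S₁ := subset_kStep G k _ (Finset.mem_singleton_self v)
    have hKFInv : KFInv G S₁ := by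
      intro u hu
      rcases Finset.mem_union.1 hu with hu | hu
      · rw [Finset.mem_singleton] at hu
        subst hu
        exact ⟨w, hvmem w hw, hw⟩
      · simp only [Finset.mem_filter, Finset.mem_univ, true_and] at hu
        obtain ⟨u', hu', hadj, _⟩ := hu
        rw [Finset.mem_singleton] at hu'
        exact ⟨v, hvS₁, hu' ▸ hadj.symm⟩
    obtain ⟨n, hn⟩ := reach_univ G k hdeg hconn (Fintype.card V) S₁ ⟨v, hvS₁⟩ hKFInv (by omega)
    exact ⟨n + 1, by rwa [Function.iterate_succ_apply]⟩
  have h1 : 1 ∈ {m | ∃ S : Finset V, S.card = m ∧ IsKForcingSet G k S} :=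
    ⟨{v}, Finset.card_singleton v, hforce⟩
  have hle : kForcingNumber G k ≤ 1 := Nat.sInf_le h1
  have hne0 : kForcingNumber G k ≠ 0 := by
    intro h0
    have : (0 : ℕ) ∈ {m | ∃ S : Finset V, S.card = m ∧ IsKForcingSet G k S} := by
      rw [← h0]
      exact Nat.sInf_mem ⟨1, h1⟩
    obtain ⟨S, hScard, n, hn⟩ := this
    rw [Finset.card_eq_zero] at hScard
    subst hScard
    have hiter : ∀ m : ℕ, (kStep G k)^[m] (∅ : Finset V) = ∅ := by
      intro m
      induction m with
      | zero => rfl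
      | succ m ih => rw [Function.iterate_succ_apply', ih, kStep_empty]
    rw [hiter n] at hn
    exact absurd hn.symm (Finset.univ_nonempty.ne_empty)
  omega
end

section
/- Let k be a positive integer and let G be a finite connected simple graph that is regular of degree k + 1. Then for any edge {u, v} of G, the pair {u, v} is a k-forcing set of G. -/
/-- If `G` is a connected graph that is regular of degree `k + 1`, then for any edge
`{u, v}` of `G`, the pair `{u, v}` is a `k`-forcing set of `G`. -/
theorem isKForcingSet_pair_of_regular {V : Type*} [Fintype V] [DecidableEq V]
    (G : SimpleGraph V) [DecidableRel G.Adj] (k : ℕ) (hk : 1 ≤ k)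
    (hconn : G.Connected) (hreg : G.IsRegularOfDegree (k + 1))
    (u v : V) (huv : G.Adj u v) :
    IsKForcingSet G k {u, v} := by
  classical
  set S0 : Finset V := {u, v} with hS0
  have hsub : ∀ S : Finset V, S ⊆ kStep G k S := fun S => Finset.subset_union_left
  -- if every vertex of S has a neighbor in S, then S forces all neighbors of S
  have key : ∀ S : Finset V, (∀ w ∈ S, ∃ x ∈ S, G.Adj w x) →
      ∀ w ∈ S, ∀ y, G.Adj w y → y ∈ kStep G k S := by
    intro S hS w hw y hwy
    refine Finset.mem_union_right _ ?_
    simp only [Finset.mem_filter, Finset.mem_univ, true_and]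
    refine ⟨w, hw, hwy, ?_⟩
    obtain ⟨x, hx, hwx⟩ := hS w hw
    have h1 : G.neighborFinset w \ S ⊆ (G.neighborFinset w).erase x := by
      intro z hz
      rw [Finset.mem_sdiff] at hz
      exact Finset.mem_erase.mpr ⟨fun h => hz.2 (h ▸ hx), hz.1⟩
    calc (G.neighborFinset w \ S).card
        ≤ ((G.neighborFinset w).erase x).card := Finset.card_le_card h1
      _ = (G.neighborFinset w).card - 1 :=
          Finset.card_erase_of_mem (by rwa [SimpleGraph.mem_neighborFinset])
      _ = (k + 1) - 1 := by rw [show (G.neighborFinset w).card = G.degree w from rfl, hreg w]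
      _ = k := by omega
  -- the invariant is preserved by one step
  have hinv : ∀ S : Finset V, (∀ w ∈ S, ∃ x ∈ S, G.Adj w x) →
      ∀ w ∈ kStep G k S, ∃ x ∈ kStep G k S, G.Adj w x := by
    intro S hS w hw
    rcases Finset.mem_union.mp hw with h | h
    · obtain ⟨x, hx, hwx⟩ := hS w h
      exact ⟨x, hsub S hx, hwx⟩
    · simp only [Finset.mem_filter, Finset.mem_univ, true_and] at h
      obtain ⟨x, hx, hxw, _⟩ := h
      exact ⟨x, hsub S hx, hxw.symm⟩
  -- the invariant holds for all iterates
  have hinvIter : ∀ n : ℕ, ∀ w ∈ (kStep G k)^[n] S0, ∃ x ∈ (kStep G k)^[n] S0, G.Adj w x := by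
    intro n
    induction n with
    | zero =>
      intro w hw
      simp only [Function.iterate_zero_apply] at hw ⊢
      rcases Finset.mem_insert.mp hw with h | h
      · exact ⟨v, Finset.mem_insert_of_mem (Finset.mem_singleton_self v), h ▸ huv⟩
      · rw [Finset.mem_singleton] at h
        exact ⟨u, Finset.mem_insert_self u _, h ▸ huv.symm⟩
    | succ n ih =>
      rw [Function.iterate_succ_apply']
      exact hinv _ ih
  -- walking back along a walk
  have walkmem : ∀ (a b : V) (p : G.Walk b a) (n : ℕ), a ∈ (kStep G k)^[n] S0 →
      b ∈ (kStep G k)^[n + p.length] S0 := by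
    intro a b p
    induction p with
    | nil =>
      intro n hn
      simpa using hn
    | @cons x y z h q ih =>
      intro n hn
      have hy : y ∈ (kStep G k)^[n + q.length] S0 := ih n hn
      have : x ∈ kStep G k ((kStep G k)^[n + q.length] S0) :=
        key _ (hinvIter _) _ hy _ h.symm
      rw [SimpleGraph.Walk.length_cons, ← Nat.add_assoc, Function.iterate_succ_apply']
      exact this
  -- monotonicity of iterates
  have mono : ∀ m n : ℕ, m ≤ n → (kStep G k)^[m] S0 ⊆ (kStep G k)^[n] S0 := by
    intro m n hmn
    induction hmn with
    | refl => exact subset_rfl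
    | step h ih =>
      rename_i n' _
      rw [Function.iterate_succ_apply']
      exact ih.trans (hsub _)
  refine ⟨Fintype.card V, Finset.eq_univ_iff_forall.mpr fun w => ?_⟩
  obtain ⟨p⟩ := hconn.preconnected w u
  have hu0 : u ∈ (kStep G k)^[0] S0 := Finset.mem_insert_self u _
  have hp := walkmem u w p.toPath 0 hu0
  rw [Nat.zero_add] at hp
  exact mono _ _ (le_of_lt p.toPath.isPath.length_lt) hp
end

section
/- Let k be a positive integer and let G be a finite connected simple graph with maximum degree Δ(G) ≥ k + 2 and order n(G). Then F_k(G) ≤ ((Δ(G) − k − 1)·n(G) + 2k) / (Δ(G) − 1). -/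
section Helpers
variable {V : Type*} [Fintype V] [DecidableEq V] (G : SimpleGraph V) [DecidableRel G.Adj] (k : ℕ)

lemma mem_kStep {S : Finset V} {v : V} :
    v ∈ kStep G k S ↔ v ∈ S ∨ ∃ u ∈ S, G.Adj u v ∧ (G.neighborFinset u \ S).card ≤ k := by
  simp [kStep]

lemma kStep_mono {S T : Finset V} (h : S ⊆ T) : kStep G k S ⊆ kStep G k T := by
  intro v hv
  rcases (mem_kStep G k).1 hv with hv | ⟨u, hu, ha, hc⟩
  · exact subset_kStep G k T (h hv)
  · exact (mem_kStep G k).2 (Or.inr ⟨u, h hu, ha,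
      le_trans (Finset.card_le_card (Finset.sdiff_subset_sdiff (le_refl _) h)) hc⟩)

def kfClosure (S : Finset V) : Finset V := (kStep G k)^[Fintype.card V] S

lemma subset_iterate (S : Finset V) (n : ℕ) : S ⊆ (kStep G k)^[n] S := by
  induction n with
  | zero => simp
  | succ n ih =>
    rw [Function.iterate_succ_apply']
    exact ih.trans (subset_kStep G k _)

lemma subset_kfClosure (S : Finset V) : S ⊆ kfClosure G k S := subset_iterate G k S _

lemma kStep_kfClosure (S : Finset V) : kStep G k (kfClosure G k S) = kfClosure G k S := by
  have key : ∀ n, kStep G k ((kStep G k)^[n] S) = (kStep G k)^[n] S ∨ n ≤ ((kStep G k)^[n] S).card := by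
    intro n
    induction n with
    | zero => exact Or.inr (Nat.zero_le _)
    | succ n ih =>
      by_cases h2 : kStep G k ((kStep G k)^[n] S) = (kStep G k)^[n] S
      · left
        rw [Function.iterate_succ_apply', h2, h2]
      · rcases ih with h | h
        · exact absurd h h2
        · right
          rw [Function.iterate_succ_apply']
          have hss : (kStep G k)^[n] S ⊂ kStep G k ((kStep G k)^[n] S) :=
            Finset.ssubset_iff_subset_ne.2 ⟨subset_kStep G k _, Ne.symm h2⟩
          have := Finset.card_lt_card hss
          omega
  rcases key (Fintype.card V) with h | h
  · exact h
  · have huniv : kfClosure G k S = Finset.univ := by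
      apply Finset.eq_univ_of_card
      exact le_antisymm (Finset.card_le_univ _) (by exact h)
    rw [huniv]
    exact Finset.univ_subset_iff.1 (subset_kStep G k _)

lemma kfClosure_subset_of_closed {S T : Finset V} (h : S ⊆ T) (hT : kStep G k T = T) :
    kfClosure G k S ⊆ T := by
  have : ∀ n, (kStep G k)^[n] S ⊆ T := by
    intro n
    induction n with
    | zero => simpa
    | succ n ih =>
      rw [Function.iterate_succ_apply']
      exact (kStep_mono G k ih).trans (le_of_eq hT)
  exact this _

lemma iterate_subset_kfClosure (S : Finset V) (n : ℕ) :
    (kStep G k)^[n] S ⊆ kfClosure G k S := by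
  induction n with
  | zero => simpa using subset_kfClosure G k S
  | succ n ih =>
    rw [Function.iterate_succ_apply']
    exact (kStep_mono G k ih).trans (le_of_eq (kStep_kfClosure G k S))

lemma kfClosure_mono {S T : Finset V} (h : S ⊆ T) : kfClosure G k S ⊆ kfClosure G k T :=
  kfClosure_subset_of_closed G k (h.trans (subset_kfClosure G k T)) (kStep_kfClosure G k T)

lemma isKForcingSet_iff {S : Finset V} : IsKForcingSet G k S ↔ kfClosure G k S = Finset.univ := by
  constructor
  · rintro ⟨n, hn⟩
    exact Finset.univ_subset_iff.1 (hn ▸ iterate_subset_kfClosure G k S n)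
  · intro h
    exact ⟨Fintype.card V, h⟩

lemma inv1_kStep {S : Finset V} (h : ∀ x ∈ S, ∃ y ∈ S, G.Adj x y) :
    ∀ x ∈ kStep G k S, ∃ y ∈ kStep G k S, G.Adj x y := by
  intro x hx
  rcases (mem_kStep G k).1 hx with hx | ⟨u, hu, ha, _⟩
  · obtain ⟨y, hy, hadj⟩ := h x hx
    exact ⟨y, subset_kStep G k S hy, hadj⟩
  · exact ⟨u, subset_kStep G k S hu, ha.symm⟩

lemma inv1_kfClosure {S : Finset V} (h : ∀ x ∈ S, ∃ y ∈ S, G.Adj x y) :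
    ∀ x ∈ kfClosure G k S, ∃ y ∈ kfClosure G k S, G.Adj x y := by
  have : ∀ n, ∀ x ∈ (kStep G k)^[n] S, ∃ y ∈ (kStep G k)^[n] S, G.Adj x y := by
    intro n
    induction n with
    | zero => simpa
    | succ n ih =>
      rw [Function.iterate_succ_apply']
      exact inv1_kStep G k ih
  exact this _

omit [Fintype V] [DecidableRel G.Adj] in
lemma walk_boundary {C : Finset V} {x y : V} (p : G.Walk x y) (hx : x ∈ C) (hy : y ∉ C) :
    ∃ u w, u ∈ C ∧ w ∉ C ∧ G.Adj u w := by
  induction p with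
  | nil => exact absurd hx hy
  | @cons a b c hab p ih =>
    by_cases hb : b ∈ C
    · exact ih hb hy
    · exact ⟨a, b, hx, hb, hab⟩

omit [DecidableRel G.Adj] in
lemma exists_boundary (hconn : G.Connected) {C : Finset V} (h1 : C.Nonempty)
    (h2 : C ≠ Finset.univ) : ∃ u w, u ∈ C ∧ w ∉ C ∧ G.Adj u w := by
  obtain ⟨x, hx⟩ := h1
  obtain ⟨y, hy⟩ : ∃ y, y ∉ C := by
    by_contra h
    push_neg at h
    exact h2 (Finset.eq_univ_iff_forall.2 h)
  obtain ⟨p⟩ := hconn.preconnected x y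
  exact walk_boundary G p hx hy

end Helpers

section Main
variable {V : Type*} [Fintype V] [DecidableEq V] (G : SimpleGraph V) [DecidableRel G.Adj] (k : ℕ)

lemma main_lemma {δ : ℕ} (hconn : G.Connected) (hk : 1 ≤ k) (hδk : k + 2 ≤ δ)
    (hdeg : ∀ x : V, G.degree x ≤ δ) :
    ∀ u : ℕ, ∀ C : Finset V, C.Nonempty → (∀ x ∈ C, ∃ y ∈ C, G.Adj x y) →
      (Finset.univ \ C).card = u →
      ∃ D : Finset V, IsKForcingSet G k (C ∪ D) ∧ (δ - 1) * D.card ≤ (δ - k - 1) * u := by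
  intro u
  induction u using Nat.strong_induction_on with
  | _ u IH =>
  intro C hCne hInv hcard
  by_cases hCl : kfClosure G k C = Finset.univ
  · refine ⟨∅, ?_, by simp⟩
    rw [Finset.union_empty]
    exact (isKForcingSet_iff G k).2 hCl
  · set C' := kfClosure G k C with hC'
    have hC'ne : C'.Nonempty := hCne.mono (subset_kfClosure G k C)
    obtain ⟨u0, w0, hu0, hw0, hadj⟩ := exists_boundary G hconn hC'ne hCl
    have hclosed : kStep G k C' = C' := kStep_kfClosure G k C
    have hbig : k + 1 ≤ (G.neighborFinset u0 \ C').card := by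
      by_contra h
      push_neg at h
      have : w0 ∈ kStep G k C' := (mem_kStep G k).2 (Or.inr ⟨u0, hu0, hadj, by omega⟩)
      rw [hclosed] at this
      exact hw0 this
    set M := G.neighborFinset u0 \ C' with hM
    have hInv' := inv1_kfClosure G k hInv
    obtain ⟨y, hy, hyadj⟩ := hInv' u0 hu0
    have hsmall : M.card + 1 ≤ δ := by
      have hynotM : y ∉ M := fun h => (Finset.mem_sdiff.1 h).2 hy
      have hins : insert y M ⊆ G.neighborFinset u0 := by
        intro z hz
        rcases Finset.mem_insert.1 hz with rfl | hz
        · exact (G.mem_neighborFinset _ _).2 hyadj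
        · exact (Finset.mem_sdiff.1 hz).1
      calc M.card + 1 = (insert y M).card := (Finset.card_insert_of_notMem hynotM).symm
        _ ≤ (G.neighborFinset u0).card := Finset.card_le_card hins
        _ = G.degree u0 := G.card_neighborFinset_eq_degree u0
        _ ≤ δ := hdeg u0
    obtain ⟨T, hTM, hTcard⟩ := Finset.exists_subset_card_eq (show k ≤ M.card by omega)
    set NW := M \ T with hNW
    have hNWcard : NW.card = M.card - k := by
      rw [hNW, Finset.card_sdiff_of_subset hTM, hTcard]
    set C2 := C' ∪ NW with hC2
    have hND : G.neighborFinset u0 \ C2 = T := by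
      apply Finset.Subset.antisymm
      · intro z hz
        obtain ⟨hzN, hzC2⟩ := Finset.mem_sdiff.1 hz
        rw [hC2, Finset.mem_union] at hzC2
        push_neg at hzC2
        obtain ⟨h1, h2⟩ := hzC2
        have hzM : z ∈ M := Finset.mem_sdiff.2 ⟨hzN, h1⟩
        by_contra hzT
        exact h2 (Finset.mem_sdiff.2 ⟨hzM, hzT⟩)
      · intro z hz
        obtain ⟨hzN, hzC'⟩ := Finset.mem_sdiff.1 (hTM hz)
        refine Finset.mem_sdiff.2 ⟨hzN, ?_⟩
        rw [hC2, Finset.mem_union]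
        push_neg
        exact ⟨hzC', fun h => (Finset.mem_sdiff.1 h).2 hz⟩
    have hTstep : T ⊆ kStep G k C2 := by
      intro t ht
      apply (mem_kStep G k).2
      refine Or.inr ⟨u0, Finset.subset_union_left hu0, ?_, ?_⟩
      · exact (G.mem_neighborFinset _ _).1 (Finset.mem_sdiff.1 (hTM ht)).1
      · rw [hND, hTcard]
    set C3 := kStep G k C2 with hC3
    have hC3sup : C' ∪ M ⊆ C3 := by
      intro z hz
      rcases Finset.mem_union.1 hz with hz | hz
      · exact subset_kStep G k C2 (Finset.mem_union_left _ hz)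
      · by_cases hzT : z ∈ T
        · exact hTstep hzT
        · exact subset_kStep G k C2 (Finset.mem_union_right _ (Finset.mem_sdiff.2 ⟨hz, hzT⟩))
    have hMC3 : M ⊆ C3 := fun z hz => hC3sup (Finset.mem_union_right _ hz)
    have hdisj : Disjoint (Finset.univ \ C3) M := by
      rw [Finset.disjoint_right]
      intro z hz hz2
      exact (Finset.mem_sdiff.1 hz2).2 (hMC3 hz)
    have hsub : (Finset.univ \ C3) ∪ M ⊆ Finset.univ \ C := by
      intro z hz
      rcases Finset.mem_union.1 hz with hz | hz
      · refine Finset.mem_sdiff.2 ⟨Finset.mem_univ z, fun hzC => ?_⟩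
        exact (Finset.mem_sdiff.1 hz).2
          (hC3sup (Finset.mem_union_left _ (subset_kfClosure G k C hzC)))
      · exact Finset.mem_sdiff.2 ⟨Finset.mem_univ z,
          fun hzC => (Finset.mem_sdiff.1 hz).2 (subset_kfClosure G k C hzC)⟩
    have hcard3 : (Finset.univ \ C3).card + M.card ≤ u := by
      rw [← hcard, ← Finset.card_union_of_disjoint hdisj]
      exact Finset.card_le_card hsub
    have hInv2 : ∀ x ∈ C2, ∃ y ∈ C2, G.Adj x y := by
      intro x hx
      rcases Finset.mem_union.1 hx with hx | hx
      · obtain ⟨y', hy', h'⟩ := hInv' x hx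
        exact ⟨y', Finset.mem_union_left _ hy', h'⟩
      · refine ⟨u0, Finset.mem_union_left _ hu0, ?_⟩
        exact ((G.mem_neighborFinset _ _).1 (Finset.mem_sdiff.1 (Finset.mem_sdiff.1 hx).1).1).symm
    have hInv3 := inv1_kStep G k hInv2
    have hC3ne : C3.Nonempty := hC'ne.mono fun z hz => hC3sup (Finset.mem_union_left _ hz)
    have hlt : (Finset.univ \ C3).card < u := by omega
    obtain ⟨D', hD'force, hD'card⟩ := IH _ hlt C3 hC3ne hInv3 rfl
    refine ⟨NW ∪ D', ?_, ?_⟩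
    · rw [isKForcingSet_iff]
      apply Finset.univ_subset_iff.1
      have h1 : kfClosure G k (C3 ∪ D') = Finset.univ := (isKForcingSet_iff G k).1 hD'force
      rw [← h1]
      apply kfClosure_subset_of_closed
      · intro z hz
        rcases Finset.mem_union.1 hz with hz | hz
        · have hsub2 : C2 ⊆ kfClosure G k (C ∪ (NW ∪ D')) := by
            intro z' hz'
            rcases Finset.mem_union.1 hz' with hz' | hz'
            · exact kfClosure_mono G k Finset.subset_union_left hz'
            · exact subset_kfClosure G k _
                (Finset.mem_union_right _ (Finset.mem_union_left _ hz'))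
          have := kStep_mono G k hsub2 hz
          rwa [kStep_kfClosure] at this
        · exact subset_kfClosure G k _
            (Finset.mem_union_right _ (Finset.mem_union_right _ hz))
      · exact kStep_kfClosure G k _
    · set b := δ - k - 1 with hb
      have hab : δ - 1 = b + k := by omega
      have hsb : NW.card ≤ b := by omega
      have hskm : NW.card + k = M.card := by omega
      calc (δ - 1) * (NW ∪ D').card
          ≤ (δ - 1) * (NW.card + D'.card) :=
            Nat.mul_le_mul le_rfl (Finset.card_union_le _ _)
        _ = (δ - 1) * NW.card + (δ - 1) * D'.card := by ring
        _ ≤ (δ - 1) * NW.card + b * (Finset.univ \ C3).card := Nat.add_le_add_left hD'card _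
        _ = b * NW.card + k * NW.card + b * (Finset.univ \ C3).card := by rw [hab]; ring
        _ ≤ b * NW.card + k * b + b * (Finset.univ \ C3).card := by
            have := Nat.mul_le_mul (le_refl k) hsb
            omega
        _ = b * (NW.card + k + (Finset.univ \ C3).card) := by ring
        _ ≤ b * u := Nat.mul_le_mul le_rfl (by omega)

end Main


/-- If `G` is connected with `Δ(G) ≥ k + 2`, then `F_k(G) ≤ ((Δ-k-1)n + 2k) / (Δ-1)`. -/
theorem kForcingNumber_le_simplified {V : Type*} [Fintype V] [DecidableEq V]
    (G : SimpleGraph V) [DecidableRel G.Adj] (k : ℕ) (hk : 1 ≤ k)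
    (hconn : G.Connected) (hΔ : k + 2 ≤ G.maxDegree) :
    (kForcingNumber G k : ℝ) ≤
      (((G.maxDegree : ℝ) - k - 1) * (Fintype.card V) + 2 * k) / ((G.maxDegree : ℝ) - 1) := by
  classical
  have hV : Nonempty V := hconn.nonempty
  set δ := G.maxDegree with hδdef
  obtain ⟨v, hv⟩ := G.exists_maximal_degree_vertex
  have hdegv : G.degree v = δ := hv.symm
  have hNcard : (G.neighborFinset v).card = δ := by
    rw [G.card_neighborFinset_eq_degree, hdegv]
  have hvN : v ∉ G.neighborFinset v := by simp
  obtain ⟨T0, hT0sub, hT0card⟩ := Finset.exists_subset_card_eq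
    (show k ≤ (G.neighborFinset v).card by omega)
  set C0 : Finset V := insert v (G.neighborFinset v \ T0) with hC0
  have hvnot : v ∉ G.neighborFinset v \ T0 := fun h => hvN (Finset.mem_sdiff.1 h).1
  have hC0card : C0.card = (δ - k) + 1 := by
    rw [hC0, Finset.card_insert_of_notMem hvnot, Finset.card_sdiff_of_subset hT0sub, hNcard, hT0card]
  have hInv0 : ∀ x ∈ C0, ∃ y ∈ C0, G.Adj x y := by
    intro x hx
    rcases Finset.mem_insert.1 hx with hxv | hx
    · rw [hxv]
      have hne : (G.neighborFinset v \ T0).Nonempty := by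
        rw [← Finset.card_pos, Finset.card_sdiff_of_subset hT0sub, hNcard, hT0card]
        omega
      obtain ⟨y, hy⟩ := hne
      exact ⟨y, Finset.mem_insert_of_mem hy,
        (G.mem_neighborFinset _ _).1 (Finset.mem_sdiff.1 hy).1⟩
    · exact ⟨v, Finset.mem_insert_self _ _,
        ((G.mem_neighborFinset _ _).1 (Finset.mem_sdiff.1 hx).1).symm⟩
  have hNC0 : G.neighborFinset v \ C0 = T0 := by
    apply Finset.Subset.antisymm
    · intro z hz
      obtain ⟨hzN, hzC⟩ := Finset.mem_sdiff.1 hz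
      rw [hC0, Finset.mem_insert] at hzC
      push_neg at hzC
      by_contra hzT
      exact hzC.2 (Finset.mem_sdiff.2 ⟨hzN, hzT⟩)
    · intro z hz
      refine Finset.mem_sdiff.2 ⟨hT0sub hz, ?_⟩
      rw [hC0, Finset.mem_insert]
      push_neg
      refine ⟨fun h => hvN (h ▸ hT0sub hz), fun h => (Finset.mem_sdiff.1 h).2 hz⟩
  set C1 := kStep G k C0 with hC1
  have hT0C1 : T0 ⊆ C1 := by
    intro t ht
    apply (mem_kStep G k).2
    refine Or.inr ⟨v, Finset.mem_insert_self _ _, ?_, ?_⟩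
    · exact (G.mem_neighborFinset _ _).1 (hT0sub ht)
    · rw [hNC0, hT0card]
  have hNvC1 : insert v (G.neighborFinset v) ⊆ C1 := by
    intro z hz
    rcases Finset.mem_insert.1 hz with rfl | hz
    · exact subset_kStep G k C0 (Finset.mem_insert_self _ _)
    · by_cases hzT : z ∈ T0
      · exact hT0C1 hzT
      · exact subset_kStep G k C0 (Finset.mem_insert_of_mem (Finset.mem_sdiff.2 ⟨hz, hzT⟩))
  have hC1card : δ + 1 ≤ C1.card := by
    calc δ + 1 = (insert v (G.neighborFinset v)).card := by
          rw [Finset.card_insert_of_notMem hvN, hNcard]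
      _ ≤ C1.card := Finset.card_le_card hNvC1
  have hInv1 := inv1_kStep G k hInv0
  have hC1ne : C1.Nonempty := ⟨v, hNvC1 (Finset.mem_insert_self _ _)⟩
  have hu1 : (Finset.univ \ C1).card + C1.card = Fintype.card V := by
    rw [Finset.card_sdiff_of_subset (Finset.subset_univ _), Finset.card_univ]
    have := Finset.card_le_univ C1
    omega
  obtain ⟨D, hDforce, hDcard⟩ := main_lemma G k hconn hk hΔ
    (fun x => G.degree_le_maxDegree x) (Finset.univ \ C1).card C1 hC1ne hInv1 rfl
  set S := C0 ∪ D with hS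
  have hSforce : IsKForcingSet G k S := by
    rw [isKForcingSet_iff]
    apply Finset.univ_subset_iff.1
    have h1 : kfClosure G k (C1 ∪ D) = Finset.univ := (isKForcingSet_iff G k).1 hDforce
    rw [← h1]
    apply kfClosure_subset_of_closed
    · intro z hz
      rcases Finset.mem_union.1 hz with hz | hz
      · have hsub2 : C0 ⊆ kfClosure G k S := (Finset.subset_union_left).trans (subset_kfClosure G k S)
        have := kStep_mono G k hsub2 hz
        rwa [kStep_kfClosure] at this
      · exact subset_kfClosure G k _ (Finset.mem_union_right _ hz)
    · exact kStep_kfClosure G k _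
  have hFle : kForcingNumber G k ≤ S.card := Nat.sInf_le ⟨S, rfl, hSforce⟩
  -- the nat inequality
  set b := δ - k - 1 with hb
  have hab : δ - 1 = b + k := by omega
  have hnat : (δ - 1) * kForcingNumber G k ≤ b * Fintype.card V + 2 * k := by
    calc (δ - 1) * kForcingNumber G k ≤ (δ - 1) * S.card := Nat.mul_le_mul le_rfl hFle
      _ ≤ (δ - 1) * (C0.card + D.card) := Nat.mul_le_mul le_rfl (Finset.card_union_le _ _)
      _ = (b + k) * ((b + 2) + D.card) := by
          rw [hab, hC0card]
          congr 2
          omega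
      _ = (b * (b + k + 2) + 2 * k) + (b + k) * D.card := by ring
      _ ≤ (b * (b + k + 2) + 2 * k) + b * (Finset.univ \ C1).card := by
          rw [← hab]
          omega
      _ = b * ((b + k + 2) + (Finset.univ \ C1).card) + 2 * k := by ring
      _ ≤ b * Fintype.card V + 2 * k := by
          have : (b + k + 2) + (Finset.univ \ C1).card ≤ Fintype.card V := by omega
          have := Nat.mul_le_mul (le_refl b) this
          omega
  -- pass to the reals
  have hpos : (0 : ℝ) < (δ : ℝ) - 1 := by
    have h3 : (3 : ℕ) ≤ δ := by omega
    have := (Nat.cast_le (α := ℝ)).2 h3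
    push_cast at this
    linarith
  rw [le_div_iff₀ hpos]
  have hc := (Nat.cast_le (α := ℝ)).2 hnat
  have e1 : ((δ - 1 : ℕ) : ℝ) = (δ : ℝ) - 1 := by
    rw [Nat.cast_sub (by omega : 1 ≤ δ)]
    norm_num
  have e2 : ((b : ℕ) : ℝ) = (δ : ℝ) - k - 1 := by
    rw [hb, Nat.sub_sub, Nat.cast_sub (by omega : k + 1 ≤ δ)]
    push_cast
    ring
  rw [Nat.cast_mul, Nat.cast_add, Nat.cast_mul, e1, e2] at hc
  push_cast at hc ⊢
  nlinarith [hc]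
end

section
/- Let k and Δ be positive integers with Δ ≥ k + 2, and let n be a real number with n ≥ Δ + 1. Then ((Δ − k − 1)·n + 2k) / (Δ − 1) ≤ ((Δ − 2)·n + 2) / (Δ + k − 2), with equality when k = 1. (That is, for k ≥ 2 the bound of Corollary 6 is at least as strong as the k-connected bound of Amos, Caro, Davila and Pepper, and for k = 1 the two bounds coincide.) -/
/-- Numerical comparison: for `Δ ≥ k + 2` and `n ≥ Δ + 1`,
`((Δ-k-1)n + 2k)/(Δ-1) ≤ ((Δ-2)n + 2)/(Δ+k-2)`, with equality when `k = 1`. -/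
theorem bound_comparison_kconnected (k Δ : ℕ) (hk : 1 ≤ k) (hΔ : k + 2 ≤ Δ)
    (n : ℝ) (hn : (Δ : ℝ) + 1 ≤ n) :
    (((Δ : ℝ) - k - 1) * n + 2 * k) / ((Δ : ℝ) - 1) ≤
      (((Δ : ℝ) - 2) * n + 2) / ((Δ : ℝ) + k - 2) ∧
    (k = 1 →
      (((Δ : ℝ) - k - 1) * n + 2 * k) / ((Δ : ℝ) - 1) =
        (((Δ : ℝ) - 2) * n + 2) / ((Δ : ℝ) + k - 2)) := by
  have hk' : (1 : ℝ) ≤ k := by exact_mod_cast hk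
  have hD : (k : ℝ) + 2 ≤ Δ := by exact_mod_cast hΔ
  have h1 : (0 : ℝ) < (Δ : ℝ) - 1 := by linarith
  have h2 : (0 : ℝ) < (Δ : ℝ) + k - 2 := by linarith
  constructor
  · rw [div_le_div_iff₀ h1 h2]
    have h3 : (0:ℝ) ≤ ((k:ℝ)-1) * k * (n - (Δ+1)) := by
      apply mul_nonneg (mul_nonneg (by linarith) (by positivity)) (by linarith)
    have h4 : (0:ℝ) ≤ ((k:ℝ)-1) * ((k:ℝ)-2) := by
      rcases eq_or_lt_of_le hk with h | h
      · simp [← h]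
      · have : (2:ℕ) ≤ k := h
        have : (2:ℝ) ≤ k := by exact_mod_cast this
        nlinarith
    nlinarith [mul_nonneg h4 (le_of_lt h1)]
  · intro h; subst h; push_cast; ring_nf
end

section
/- Let k and Δ be positive integers with Δ ≥ k + 2, let m be a real number with 1 ≤ m ≤ k, and let n be a real number with n ≥ Δ + 1. Then ((Δ − k − 1)·n + 2k) / (Δ − 1) ≤ (Δ − k + 1)·n / (Δ − k + 1 + m). (That is, the bound of Corollary 6 is at least as strong as the degree bound of Amos, Caro, Davila and Pepper, in which m = min{δ, k}.) -/
/-- Numerical comparison: for `Δ ≥ k + 2`, `1 ≤ m ≤ k` and `n ≥ Δ + 1`,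
`((Δ-k-1)n + 2k)/(Δ-1) ≤ (Δ-k+1)n/(Δ-k+1+m)`. -/
theorem bound_comparison_degree (k Δ : ℕ) (hk : 1 ≤ k) (hΔ : k + 2 ≤ Δ)
    (m : ℝ) (hm1 : 1 ≤ m) (hmk : m ≤ (k : ℝ))
    (n : ℝ) (hn : (Δ : ℝ) + 1 ≤ n) :
    (((Δ : ℝ) - k - 1) * n + 2 * k) / ((Δ : ℝ) - 1) ≤
      ((Δ : ℝ) - k + 1) * n / ((Δ : ℝ) - k + 1 + m) := by
  have hk' : (1 : ℝ) ≤ (k : ℝ) := by exact_mod_cast hk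
  have hΔ' : (k : ℝ) + 2 ≤ (Δ : ℝ) := by exact_mod_cast hΔ
  have hD : (0 : ℝ) < (Δ : ℝ) - 1 := by linarith
  have hE : (0 : ℝ) < (Δ : ℝ) - k + 1 + m := by linarith
  rw [div_le_div_iff₀ hD hE]
  nlinarith [mul_nonneg (sub_nonneg.2 hmk) (by linarith : (0:ℝ) ≤ (Δ:ℝ) - k - 1),
    mul_nonneg (by nlinarith : (0:ℝ) ≤ (k:ℝ) * ((Δ:ℝ) - k + 1) - m * ((Δ:ℝ) - k - 1))
      (by linarith : (0:ℝ) ≤ n - ((Δ:ℝ) - k + 1 + m)),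
    mul_pos hD hE]
end
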